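/- Let μ ≥ 1 and let N be an even integer with N > 2μ. Then ‖T_N(μ)⁻¹‖₁ < ‖(T_N(μ)⁻¹)_{rows 1:2⌊μ⌋}‖₁ + 1/(2μ), where (T_N(μ)⁻¹)_{rows 1:2⌊μ⌋} denotes the submatrix of T_N(μ)⁻¹ consisting of its first 2⌊μ⌋ rows (and all N columns). The bound is uniform with respect to the even approximation dimension N. -/

import Mathlib

/-- The `N × N` tridiagonal matrix `T_N(μ)` with diagonal `2, 4, …, 2N`, subdiagonal `μ`
and superdiagonal `-μ` (0-based indexing). -/
noncomputable def Tmat (N : ℕ) (μ : ℝ) : Matrix (Fin N) (Fin N) ℝ :=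
  Matrix.of fun i j =>
    if (i : ℕ) = (j : ℕ) then 2 * (((i : ℕ) : ℝ) + 1)
    else if (i : ℕ) = (j : ℕ) + 1 then μ
    else if (j : ℕ) = (i : ℕ) + 1 then -μ
    else 0

/-- The matrix norm induced by the `‖·‖₁` vector norm: the maximum over columns of the
sum of absolute values of the entries of the column. -/
noncomputable def mat1norm {m n : ℕ} (A : Matrix (Fin m) (Fin n) ℝ) : ℝ :=
  ⨆ l : Fin n, ∑ i : Fin m, |A i l|


noncomputable def dd (i : ℕ) : ℝ := 2 * ((i : ℝ) + 1)

noncomputable def sig (μ : ℝ) : ℕ → ℝ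
  | 0 => μ / 2
  | (i+1) => μ / (dd (i+1) + μ * sig μ i)

noncomputable def sg (μ : ℝ) : ℕ → ℝ
  | 0 => 0
  | (i+1) => sig μ i

noncomputable def tt (μ : ℝ) (N : ℕ) : ℕ → ℝ
  | 0 => μ / dd (N-1)
  | (j+1) => μ / (dd (N-2-j) + μ * tt μ N j)

noncomputable def tb (μ : ℝ) (N : ℕ) (i : ℕ) : ℝ :=
  if i < N then tt μ N (N-1-i) else 0

noncomputable def xl (μ : ℝ) (N : ℕ) (l : ℕ) : ℝ :=
  1 / (dd l + μ * sg μ l + μ * tb μ N (l+1))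

noncomputable def xcol (μ : ℝ) (N : ℕ) (l i : ℕ) : ℝ :=
  xl μ N l * (if i ≤ l then ∏ j ∈ Finset.Ico i l, sg μ (j+1)
              else ∏ j ∈ Finset.Ico l i, (-(tb μ N (j+1))))

noncomputable def Bmat (N : ℕ) (μ : ℝ) : Matrix (Fin N) (Fin N) ℝ :=
  Matrix.of fun i l => xcol μ N (l : ℕ) (i : ℕ)

lemma dd_pos (i : ℕ) : 0 < dd i := by
  have : (0:ℝ) ≤ (i:ℝ) := Nat.cast_nonneg i
  unfold dd; linarith

lemma dd_mono {i j : ℕ} (h : i ≤ j) : dd i ≤ dd j := by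
  have : (i:ℝ) ≤ (j:ℝ) := Nat.cast_le.mpr h
  unfold dd; linarith

section Pos
variable {μ : ℝ} (hμ : 0 < μ)

include hμ

lemma sig_pos (i : ℕ) : 0 < sig μ i := by
  induction i with
  | zero => simpa [sig] using by positivity
  | succ i ih =>
      have h1 := dd_pos (i+1)
      have : 0 < dd (i+1) + μ * sig μ i := by nlinarith
      simp only [sig]
      positivity

lemma sig_le (i : ℕ) : sig μ i ≤ μ / dd i := by
  cases i with
  | zero => simp [sig, dd]
  | succ i =>
      have h1 := dd_pos (i+1)
      have h2 := sig_pos hμ (μ := μ) i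
      simp only [sig]
      apply div_le_div_of_nonneg_left hμ.le h1
      nlinarith

lemma sg_nonneg (i : ℕ) : 0 ≤ sg μ i := by
  cases i with
  | zero => simp [sg]
  | succ i => exact (sig_pos hμ i).le

lemma sg_le (i : ℕ) : sg μ (i+1) ≤ μ / dd i := by
  simpa [sg] using sig_le hμ (μ := μ) i

lemma sg_identity (i : ℕ) : sg μ (i+1) * (dd i + μ * sg μ i) = μ := by
  cases i with
  | zero =>
      simp [sg, sig, dd]
  | succ i =>
      have h1 := dd_pos (i+1)
      have h2 := sig_pos hμ (μ := μ) i
      have hden : dd (i+1) + μ * sig μ i ≠ 0 := by nlinarith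
      simp only [sg, sig]
      field_simp

lemma tt_pos {N : ℕ} (j : ℕ) : 0 < tt μ N j := by
  induction j with
  | zero => simp only [tt]; exact div_pos hμ (dd_pos _)
  | succ j ih =>
      have h1 := dd_pos (N-2-j)
      have hp : 0 < dd (N-2-j) + μ * tt μ N j := by nlinarith
      simp only [tt]
      exact div_pos hμ hp

lemma tt_le {N : ℕ} (j : ℕ) : tt μ N j ≤ μ / dd (N-1-j) := by
  cases j with
  | zero => simp [tt]
  | succ j =>
      have h1 := dd_pos (N-2-j)
      have h2 := tt_pos hμ (μ := μ) (N := N) j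
      have he : N-1-(j+1) = N-2-j := by omega
      rw [he]
      simp only [tt]
      apply div_le_div_of_nonneg_left hμ.le h1
      nlinarith

lemma tb_nonneg {N : ℕ} (i : ℕ) : 0 ≤ tb μ N i := by
  unfold tb
  split
  · exact (tt_pos hμ _).le
  · exact le_refl 0

lemma tb_le {N : ℕ} (i : ℕ) : tb μ N i ≤ μ / dd i := by
  unfold tb
  split
  · rename_i h
    have he : N-1-(N-1-i) = i := by omega
    have := tt_le hμ (μ := μ) (N := N) (N-1-i)
    rwa [he] at this
  · have := dd_pos i
    positivity

lemma tb_identity {N : ℕ} {i : ℕ} (h1 : 1 ≤ i) (h2 : i ≤ N - 1) (hN : 1 ≤ N) :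
    tb μ N i * (dd i + μ * tb μ N (i+1)) = μ := by
  rcases eq_or_lt_of_le h2 with he | hlt
  · -- i = N-1
    have hiN : i < N := by omega
    have hi1N : ¬ (i + 1 < N) := by omega
    have hdd := dd_pos i
    unfold tb
    simp only [if_pos hiN, if_neg hi1N]
    have : N - 1 - i = 0 := by omega
    rw [this]
    simp only [tt]
    have : N - 1 = i := by omega
    rw [this]
    field_simp
    simp
  · -- i < N - 1
    have hiN : i < N := by omega
    have hi1N : i + 1 < N := by omega
    unfold tb
    simp only [if_pos hiN, if_pos hi1N]
    have e1 : N - 1 - i = (N - 2 - i) + 1 := by omega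
    have e2 : N - 1 - (i+1) = N - 2 - i := by omega
    rw [e1, e2]
    have h3 := tt_pos hμ (μ := μ) (N := N) (N - 2 - i)
    have hdd := dd_pos (N - 2 - (N - 2 - i))
    simp only [tt]
    have e3 : N - 2 - (N - 2 - i) = i := by omega
    rw [e3] at hdd ⊢
    have hden : dd i + μ * tt μ N (N - 2 - i) ≠ 0 := by nlinarith
    field_simp

end Pos

section Xcol
variable {μ : ℝ} (hμ : 0 < μ)

lemma xl_den_pos (hμ : 0 < μ) (N l : ℕ) : 0 < dd l + μ * sg μ l + μ * tb μ N (l+1) := by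
  have h1 := dd_pos l
  have h2 := sg_nonneg hμ (μ := μ) l
  have h3 := tb_nonneg hμ (μ := μ) (N := N) (l+1)
  nlinarith

lemma xl_pos (hμ : 0 < μ) (N l : ℕ) : 0 < xl μ N l :=
  div_pos one_pos (xl_den_pos hμ N l)

lemma xl_le (hμ : 0 < μ) (N l : ℕ) : xl μ N l ≤ 1 / dd l := by
  have h1 := dd_pos l
  apply div_le_div_of_nonneg_left one_pos.le h1
  have h2 := sg_nonneg hμ (μ := μ) l
  have h3 := tb_nonneg hμ (μ := μ) (N := N) (l+1)
  nlinarith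

lemma xcol_le_branch (N : ℕ) {l i : ℕ} (h : i ≤ l) :
    xcol μ N l i = xl μ N l * ∏ j ∈ Finset.Ico i l, sg μ (j+1) := by
  simp [xcol, h]

lemma xcol_ge_branch (N : ℕ) {l i : ℕ} (h : l ≤ i) :
    xcol μ N l i = xl μ N l * ∏ j ∈ Finset.Ico l i, (-(tb μ N (j+1))) := by
  rcases eq_or_lt_of_le h with he | hlt
  · subst he; simp [xcol]
  · have : ¬ (i ≤ l) := by omega
    simp [xcol, this]

lemma xcol_step_up (N : ℕ) {l i : ℕ} (h : i < l) :
    xcol μ N l i = sg μ (i+1) * xcol μ N l (i+1) := by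
  rw [xcol_le_branch (μ := μ) N h.le, xcol_le_branch (μ := μ) N h]
  rw [Finset.prod_eq_prod_Ico_succ_bot h]
  ring

lemma xcol_step_down (N : ℕ) {l i : ℕ} (h : l ≤ i) :
    xcol μ N l (i+1) = (-(tb μ N (i+1))) * xcol μ N l i := by
  rw [xcol_ge_branch (μ := μ) N h, xcol_ge_branch (μ := μ) N (h.trans (Nat.le_succ i))]
  rw [Finset.prod_Ico_succ_top h]
  ring

lemma xcol_top (hμ : 0 < μ) (N : ℕ) {l : ℕ} (h : l < N) : xcol μ N l N = 0 := by
  rw [xcol_ge_branch (μ := μ) N h.le]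
  have : (-(tb μ N ((N-1)+1))) = 0 := by
    have : ¬ ((N-1)+1 < N) := by omega
    simp [tb, this]
  rw [Finset.prod_eq_zero (i := N-1) (by simp [Finset.mem_Ico]; omega) this]
  ring

/-- The main row equation. -/
lemma row_eq (hμ : 0 < μ) (N : ℕ) {l i : ℕ} (hl : l < N) (hi : i < N) :
    (if i = 0 then 0 else μ * xcol μ N l (i-1)) + dd i * xcol μ N l i
      - μ * xcol μ N l (i+1) = if i = l then 1 else 0 := by
  rcases Nat.lt_trichotomy i l with hil | hil | hil
  · -- i < l
    have hne : i ≠ l := by omega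
    rw [if_neg hne]
    have hx : xcol μ N l i = sg μ (i+1) * xcol μ N l (i+1) := xcol_step_up (μ := μ) N hil
    cases i with
    | zero =>
        rw [if_pos rfl]
        rw [hx]
        have hid := sg_identity hμ (μ := μ) 0
        simp only [sg] at hid ⊢
        linear_combination (xcol μ N l 1) * hid
    | succ i =>
        rw [if_neg (Nat.succ_ne_zero i)]
        have hx' : xcol μ N l i = sg μ (i+1) * xcol μ N l (i+1) := xcol_step_up (μ := μ) N (by omega)
        have hid := sg_identity hμ (μ := μ) (i+1)
        simp only [Nat.succ_sub_one]
        rw [hx', hx]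
        linear_combination (xcol μ N l (i+1+1)) * hid
  · -- i = l
    subst hil
    rw [if_pos rfl]
    have hdown : xcol μ N i (i+1) = (-(tb μ N (i+1))) * xcol μ N i i :=
      xcol_step_down (μ := μ) N le_rfl
    have hxi : xcol μ N i i = xl μ N i := by
      rw [xcol_le_branch (μ := μ) N le_rfl]; simp
    have hden := xl_den_pos (μ := μ) hμ N i
    have hxl : xl μ N i * (dd i + μ * sg μ i + μ * tb μ N (i+1)) = 1 := by
      unfold xl; field_simp
    cases i with
    | zero =>
        rw [if_pos rfl]
        rw [hdown, hxi]
        simp only [sg] at hxl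
        nlinarith [hxl]
    | succ i =>
        rw [if_neg (Nat.succ_ne_zero i)]
        simp only [Nat.succ_sub_one]
        have hup : xcol μ N (i+1) i = sg μ (i+1) * xcol μ N (i+1) (i+1) :=
          xcol_step_up (μ := μ) N (by omega)
        rw [hup, hdown, hxi]
        nlinarith [hxl]
  · -- i > l
    have hne : i ≠ l := by omega
    rw [if_neg hne]
    obtain ⟨i, rfl⟩ : ∃ m, i = m + 1 := ⟨i - 1, by omega⟩
    rw [if_neg (Nat.succ_ne_zero i)]
    simp only [Nat.succ_sub_one]
    have hx : xcol μ N l (i+1) = (-(tb μ N (i+1))) * xcol μ N l i :=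
      xcol_step_down (μ := μ) N (by omega)
    have hx' : xcol μ N l (i+2) = (-(tb μ N (i+2))) * xcol μ N l (i+1) :=
      xcol_step_down (μ := μ) N (by omega)
    have hid := tb_identity (μ := μ) hμ (N := N) (i := i+1) (by omega) (by omega) (by omega)
    rw [hx', hx]
    linear_combination (-(xcol μ N l i)) * hid

end Xcol

lemma tri_sum (F G H : ℕ → ℝ) (N i : ℕ) (hi : i < N) :
    ∑ j ∈ Finset.range N,
      (if i = j then F j else if i = j+1 then G j else if j = i+1 then H j else 0)
    = (if i = 0 then 0 else G (i-1)) + F i + (if i+1 < N then H (i+1) else 0) := by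
  have hsplit : ∀ j, (if i = j then F j else if i = j+1 then G j else if j = i+1 then H j else 0)
      = (if j = i then F j else 0) + (if i = j+1 then G j else 0) + (if j = i+1 then H j else 0) := by
    intro j
    split_ifs <;> (try (exfalso; omega)) <;> ring
  rw [Finset.sum_congr rfl (fun j _ => hsplit j)]
  rw [Finset.sum_add_distrib, Finset.sum_add_distrib]
  have hF : ∑ j ∈ Finset.range N, (if j = i then F j else 0) = F i := by
    rw [Finset.sum_ite_eq' (Finset.range N) i F]
    simp [Finset.mem_range.mpr hi]
  have hG : ∑ j ∈ Finset.range N, (if i = j+1 then G j else 0)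
      = (if i = 0 then 0 else G (i-1)) := by
    cases i with
    | zero => simp
    | succ m =>
        rw [if_neg (Nat.succ_ne_zero m)]
        have : ∀ j ∈ Finset.range N, (if m+1 = j+1 then G j else 0) = (if j = m then G j else 0) := by
          intro j _
          split_ifs <;> (try (exfalso; omega)) <;> rfl
        rw [Finset.sum_congr rfl this, Finset.sum_ite_eq' (Finset.range N) m G]
        simp only [Nat.succ_sub_one]
        rw [if_pos (Finset.mem_range.mpr (by omega))]
  have hH : ∑ j ∈ Finset.range N, (if j = i+1 then H j else 0)
      = (if i+1 < N then H (i+1) else 0) := by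
    rw [Finset.sum_ite_eq' (Finset.range N) (i+1) H]
    simp [Finset.mem_range]
  rw [hF, hG, hH]
  ring

lemma TB_eq_one {μ : ℝ} (hμ : 0 < μ) (N : ℕ) : Tmat N μ * Bmat N μ = 1 := by
  ext i lc
  rw [Matrix.mul_apply]
  have hstep : ∀ j : Fin N, Tmat N μ i j * Bmat N μ j lc =
      (fun jn => (if (i:ℕ) = jn then dd jn * xcol μ N (lc:ℕ) jn
        else if (i:ℕ) = jn+1 then μ * xcol μ N (lc:ℕ) jn
        else if jn = (i:ℕ)+1 then -μ * xcol μ N (lc:ℕ) jn else 0)) (j : ℕ) := by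
    intro j
    simp only [Tmat, Bmat, Matrix.of_apply, dd]
    split_ifs with h1 h2 h3 <;> first | (rw [h1]) | ring
  rw [Finset.sum_congr rfl (fun j _ => hstep j)]
  rw [Fin.sum_univ_eq_sum_range (fun jn => (if (i:ℕ) = jn then dd jn * xcol μ N (lc:ℕ) jn
        else if (i:ℕ) = jn+1 then μ * xcol μ N (lc:ℕ) jn
        else if jn = (i:ℕ)+1 then -μ * xcol μ N (lc:ℕ) jn else 0)) N]
  rw [tri_sum _ _ _ N (i:ℕ) i.isLt]
  have hlast : (if (i:ℕ)+1 < N then -μ * xcol μ N (lc:ℕ) ((i:ℕ)+1) else 0)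
      = -μ * xcol μ N (lc:ℕ) ((i:ℕ)+1) := by
    split_ifs with h
    · rfl
    · have hiN : (i:ℕ)+1 = N := by omega
      rw [hiN, xcol_top hμ N lc.isLt]
      ring
  rw [hlast]
  have hrow := row_eq (μ := μ) hμ N (l := (lc:ℕ)) (i := (i:ℕ)) lc.isLt i.isLt
  rw [Matrix.one_apply]
  have h2 : (if i = lc then (1:ℝ) else 0) = (if (i:ℕ) = (lc:ℕ) then 1 else 0) := by
    simp [Fin.ext_iff]
  rw [h2, ← hrow]
  ring

lemma Tinv_eq {μ : ℝ} (hμ : 0 < μ) (N : ℕ) : (Tmat N μ)⁻¹ = Bmat N μ :=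
  Matrix.inv_eq_right_inv (TB_eq_one hμ N)

open Matrix

noncomputable def Dg (N : ℕ) : Matrix (Fin N) (Fin N) ℝ :=
  Matrix.diagonal fun i => (-1 : ℝ)^(i : ℕ)

lemma Dg_sq (N : ℕ) : Dg N * Dg N = 1 := by
  unfold Dg
  rw [Matrix.diagonal_mul_diagonal]
  convert Matrix.diagonal_one
  rw [← mul_pow]
  norm_num

lemma T_transpose {μ : ℝ} (N : ℕ) : (Tmat N μ)ᵀ = Dg N * Tmat N μ * Dg N := by
  ext i j
  simp only [Matrix.transpose_apply, Dg, Matrix.mul_diagonal, Matrix.diagonal_mul, Tmat,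
    Matrix.of_apply]
  have hpp : ∀ a : ℕ, (-1:ℝ)^a * (-1)^a = 1 := fun a => by rw [← mul_pow]; norm_num
  rcases Nat.lt_trichotomy (i:ℕ) (j:ℕ) with h | h | h
  · by_cases h2 : (j:ℕ) = (i:ℕ)+1
    · rw [if_neg (by omega : ¬ ((j:ℕ) = (i:ℕ))), if_pos h2,
        if_neg (by omega : ¬ ((i:ℕ) = (j:ℕ))), if_neg (by omega : ¬ ((i:ℕ) = (j:ℕ)+1)),
        if_pos h2, h2, pow_succ]
      linear_combination (-μ) * hpp (i:ℕ)
    · rw [if_neg (by omega : ¬ ((j:ℕ) = (i:ℕ))), if_neg h2,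
        if_neg (by omega : ¬ ((i:ℕ) = (j:ℕ)+1)),
        if_neg (by omega : ¬ ((i:ℕ) = (j:ℕ))), if_neg (by omega : ¬ ((i:ℕ) = (j:ℕ)+1)),
        if_neg h2]
      ring
  · rw [if_pos h.symm, if_pos h, h]
    linear_combination (-(2*((j:ℕ):ℝ)+2)) * hpp (j:ℕ)
  · by_cases h2 : (i:ℕ) = (j:ℕ)+1
    · rw [if_neg (by omega : ¬ ((j:ℕ) = (i:ℕ))), if_neg (by omega : ¬ ((j:ℕ) = (i:ℕ)+1)),
        if_pos h2, if_neg (by omega : ¬ ((i:ℕ) = (j:ℕ))), if_pos h2, h2, pow_succ]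
      linear_combination μ * hpp (j:ℕ)
    · rw [if_neg (by omega : ¬ ((j:ℕ) = (i:ℕ))), if_neg (by omega : ¬ ((j:ℕ) = (i:ℕ)+1)),
        if_neg h2, if_neg (by omega : ¬ ((i:ℕ) = (j:ℕ))), if_neg h2,
        if_neg (by omega : ¬ ((j:ℕ) = (i:ℕ)+1))]
      ring

lemma B_transpose {μ : ℝ} (hμ : 0 < μ) (N : ℕ) :
    (Bmat N μ)ᵀ = Dg N * Bmat N μ * Dg N := by
  have h1 : (Tmat N μ)ᵀ * (Dg N * Bmat N μ * Dg N) = 1 := by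
    rw [T_transpose]
    have hassoc : Dg N * Tmat N μ * Dg N * (Dg N * Bmat N μ * Dg N)
        = Dg N * (Tmat N μ * (Dg N * Dg N) * Bmat N μ) * Dg N := by
      noncomm_ring
    rw [hassoc, Dg_sq, mul_one, TB_eq_one hμ, mul_one, Dg_sq]
  have h2 : ((Tmat N μ)ᵀ)⁻¹ = Dg N * Bmat N μ * Dg N := Matrix.inv_eq_right_inv h1
  rw [← Matrix.transpose_nonsing_inv, Tinv_eq hμ] at h2
  exact h2

lemma B_abs_symm {μ : ℝ} (hμ : 0 < μ) (N : ℕ) (i l : Fin N) :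
    |Bmat N μ i l| = |Bmat N μ l i| := by
  have h := congrFun (congrFun (B_transpose hμ N) i) l
  simp only [Matrix.transpose_apply, Dg, Matrix.mul_diagonal, Matrix.diagonal_mul] at h
  rw [h, abs_mul, abs_mul, abs_pow, abs_pow]
  simp

lemma mygeom_le {r : ℝ} (hr : 0 ≤ r) (hr1 : r < 1) (M : ℕ) :
    ∑ t ∈ Finset.range M, r^t ≤ 1/(1-r) := by
  have h1 : (∑ t ∈ Finset.range M, r^t) * (r - 1) = r^M - 1 := geom_sum_mul r M
  rw [le_div_iff₀ (by linarith : (0:ℝ) < 1 - r)]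
  nlinarith [pow_nonneg hr M]

lemma mylin_le {r : ℝ} (hr : 0 ≤ r) (hr1 : r ≤ 1) (m : ℕ) :
    ∑ t ∈ Finset.range (m+1), r^t ≤ 1 + m*r := by
  induction m with
  | zero => simp
  | succ m ih =>
      rw [Finset.sum_range_succ]
      have h1 : r^(m+1) ≤ r := by
        calc r^(m+1) = r^m * r := by rw [pow_succ]
        _ ≤ 1 * r := by
            apply mul_le_mul_of_nonneg_right _ hr
            exact pow_le_one₀ hr hr1
        _ = r := one_mul r
      push_cast
      push_cast at ih
      linarith

lemma sg_pair_prod {μ : ℝ} (hμ : 0 < μ) (c : ℕ) : ∀ b : ℕ,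
    ∏ j ∈ Finset.Ico b (b + 2*c), sg μ (j+1) ≤ 1 := by
  induction c with
  | zero => intro b; simp
  | succ c ih =>
      intro b
      have he : b + 2*(c+1) = (b+2) + 2*c := by omega
      rw [he, ← Finset.prod_Ico_consecutive _ (by omega : b ≤ b+2) (by omega : b+2 ≤ (b+2)+2*c)]
      have h1 : ∏ j ∈ Finset.Ico b (b+2), sg μ (j+1) = sg μ (b+1) * sg μ (b+2) := by
        rw [Finset.prod_eq_prod_Ico_succ_bot (by omega : b < b+2)]
        rw [show b + 2 = (b+1)+1 from rfl, Finset.prod_eq_prod_Ico_succ_bot (by omega : b+1 < b+2)]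
        simp [Finset.Ico_self]
      have hid := sg_identity hμ (μ := μ) (b+1)
      have hs1 := sg_nonneg hμ (μ := μ) (b+1)
      have hs2 := sg_nonneg hμ (μ := μ) (b+2)
      have hdd := dd_pos (b+1)
      have hpair : sg μ (b+1) * sg μ (b+2) ≤ 1 := by nlinarith
      have hprodnn : (0:ℝ) ≤ ∏ j ∈ Finset.Ico (b+2) ((b+2)+2*c), sg μ (j+1) :=
        Finset.prod_nonneg (fun j _ => sg_nonneg hμ (j+1))
      calc (∏ j ∈ Finset.Ico b (b+2), sg μ (j+1)) * ∏ j ∈ Finset.Ico (b+2) ((b+2)+2*c), sg μ (j+1)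
          ≤ 1 * 1 := by
            exact mul_le_mul (by rw [h1]; exact hpair) (ih (b+2)) hprodnn zero_le_one
        _ = 1 := by ring

lemma myprod_le_pow (s : Finset ℕ) (f : ℕ → ℝ) (r : ℝ)
    (h0 : ∀ j ∈ s, 0 ≤ f j) (h1 : ∀ j ∈ s, f j ≤ r) :
    ∏ j ∈ s, f j ≤ r ^ s.card := by
  induction s using Finset.cons_induction with
  | empty => simp
  | cons a s ha ih =>
      rw [Finset.prod_cons, Finset.card_cons, pow_succ']
      have hr : 0 ≤ r := le_trans (h0 a (Finset.mem_cons_self a s)) (h1 a (Finset.mem_cons_self a s))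
      exact mul_le_mul (h1 a (Finset.mem_cons_self a s))
        (ih (fun j hj => h0 j (Finset.mem_cons_of_mem hj))
            (fun j hj => h1 j (Finset.mem_cons_of_mem hj)))
        (Finset.prod_nonneg (fun j hj => h0 j (Finset.mem_cons_of_mem hj))) hr

lemma polyA (s t : ℝ) (hs : 0 ≤ s) (ht : 0 ≤ t) (ht1 : t ≤ 1) :
    0 < 712 - 730*t + 32*t^2 + 2*t^3 + s*(466 - 384*t + 10*t^2) + s^2*(96 - 50*t) + 6*s^3 := by
  nlinarith [mul_nonneg hs ht, mul_nonneg hs (by linarith : (0:ℝ) ≤ 1 - t),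
    mul_nonneg (mul_nonneg hs hs) (by linarith : (0:ℝ) ≤ 1 - t),
    mul_nonneg (mul_nonneg ht ht) (by linarith : (0:ℝ) ≤ 1 - t),
    mul_nonneg (mul_nonneg hs ht) (by linarith : (0:ℝ) ≤ 1 - t),
    mul_nonneg ht (by linarith : (0:ℝ) ≤ 1 - t), mul_nonneg (mul_nonneg hs hs) hs,
    mul_nonneg (mul_nonneg hs hs) ht]

section Tail

variable {μ : ℝ} {N n l : ℕ}

set_option maxHeartbeats 2000000 in
/-- Case A : `2n ≤ l`. -/
lemma tailA (hμ1 : 1 ≤ μ) (hn1 : 1 ≤ n) (hnr : (n:ℝ) ≤ μ) (hnr2 : μ < (n:ℝ)+1)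
    (hkN : 2*n+2 ≤ N) (hl : l < N) (hkl : 2*n ≤ l) :
    ∑ i ∈ Finset.Ico (2*n) N, |xcol μ N l i| < 1/(2*μ) := by
  have hμ0 : (0:ℝ) < μ := by linarith
  set k := 2*n with hk
  set K : ℝ := (n : ℝ) with hK
  have hK1 : (1:ℝ) ≤ K := by rw [hK]; exact_mod_cast hn1
  have hddk : dd k = 4*K+2 := by unfold dd; push_cast [hk]; ring
  have hddk1 : dd (k+1) = 4*K+4 := by unfold dd; push_cast [hk]; ring
  set q1 : ℝ := μ / dd k with hq1
  set q2 : ℝ := μ / dd (k+1) with hq2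
  have hq1nn : 0 ≤ q1 := div_nonneg hμ0.le (dd_pos k).le
  have hq2nn : 0 ≤ q2 := div_nonneg hμ0.le (dd_pos (k+1)).le
  have hq11 : q1 < 1 := by
    rw [hq1, div_lt_one (dd_pos k), hddk]; linarith
  have hq21 : q2 < 1 := by
    rw [hq2, div_lt_one (dd_pos (k+1)), hddk1]; linarith
  set m := l - k with hm
  have hlm : l = k + m := by omega
  set M : ℝ := (m : ℝ) with hM
  have hMnn : (0:ℝ) ≤ M := Nat.cast_nonneg m
  have hddl : dd l = 4*K + 2*M + 2 := by unfold dd; push_cast [hlm, hk]; ring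
  -- upper part entries
  have hup : ∀ i ∈ Finset.Ico k (l+1), |xcol μ N l i| ≤ xl μ N l * q1^(l-i) := by
    intro i hi
    rw [Finset.mem_Ico] at hi
    have hil : i ≤ l := by omega
    rw [xcol_le_branch N hil, abs_mul, abs_of_pos (xl_pos hμ0 N l),
      abs_of_nonneg (Finset.prod_nonneg (fun j _ => sg_nonneg hμ0 (j+1)))]
    apply mul_le_mul_of_nonneg_left _ (xl_pos hμ0 N l).le
    have hcard : (Finset.Ico i l).card = l - i := Nat.card_Ico i l
    rw [← hcard]
    apply myprod_le_pow _ _ _ (fun j _ => sg_nonneg hμ0 (j+1))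
    intro j hj
    rw [Finset.mem_Ico] at hj
    calc sg μ (j+1) ≤ μ / dd j := sg_le hμ0 j
    _ ≤ μ / dd k := div_le_div_of_nonneg_left hμ0.le (dd_pos k) (dd_mono (by omega))
  -- lower part entries
  have hdown : ∀ i ∈ Finset.Ico (l+1) N, |xcol μ N l i| ≤ xl μ N l * q2^(i-l) := by
    intro i hi
    rw [Finset.mem_Ico] at hi
    have hli : l ≤ i := by omega
    rw [xcol_ge_branch N hli, abs_mul, abs_of_pos (xl_pos hμ0 N l), Finset.abs_prod]
    apply mul_le_mul_of_nonneg_left _ (xl_pos hμ0 N l).le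
    have hcard : (Finset.Ico l i).card = i - l := Nat.card_Ico l i
    rw [← hcard]
    have habs : ∀ j ∈ Finset.Ico l i, |(-(tb μ N (j+1)))| = tb μ N (j+1) := fun j _ => by
      rw [abs_neg, abs_of_nonneg (tb_nonneg hμ0 (j+1))]
    rw [Finset.prod_congr rfl habs]
    apply myprod_le_pow _ _ _ (fun j _ => tb_nonneg hμ0 (j+1))
    intro j hj
    rw [Finset.mem_Ico] at hj
    calc tb μ N (j+1) ≤ μ / dd (j+1) := tb_le hμ0 (j+1)
    _ ≤ μ / dd (k+1) := div_le_div_of_nonneg_left hμ0.le (dd_pos (k+1)) (dd_mono (by omega))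
  -- split the sum
  have hsplit : ∑ i ∈ Finset.Ico k N, |xcol μ N l i|
      = (∑ i ∈ Finset.Ico k (l+1), |xcol μ N l i|) + ∑ i ∈ Finset.Ico (l+1) N, |xcol μ N l i| := by
    rw [Finset.sum_Ico_consecutive _ (by omega : k ≤ l+1) (by omega : l+1 ≤ N)]
  -- reindex upper sum
  have hA1 : ∑ i ∈ Finset.Ico k (l+1), q1^(l-i) = ∑ t ∈ Finset.range (m+1), q1^t := by
    rw [Finset.sum_Ico_eq_sum_range]
    have hlen : l + 1 - k = m + 1 := by omega
    rw [hlen]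
    rw [← Finset.sum_range_reflect (fun t => q1^t) (m+1)]
    apply Finset.sum_congr rfl
    intro i hi
    rw [Finset.mem_range] at hi
    congr 1
    omega
  have hA2 : ∑ i ∈ Finset.Ico (l+1) N, q2^(i-l) = q2 * ∑ t ∈ Finset.range (N-(l+1)), q2^t := by
    rw [Finset.sum_Ico_eq_sum_range, Finset.mul_sum]
    apply Finset.sum_congr rfl
    intro i hi
    have : l + 1 + i - l = i + 1 := by omega
    rw [this, pow_succ']
  have hS : ∑ i ∈ Finset.Ico k N, |xcol μ N l i|
      ≤ xl μ N l * ((∑ t ∈ Finset.range (m+1), q1^t) + q2 * ∑ t ∈ Finset.range (N-(l+1)), q2^t) := by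
    rw [hsplit, mul_add]
    apply add_le_add
    · calc ∑ i ∈ Finset.Ico k (l+1), |xcol μ N l i|
          ≤ ∑ i ∈ Finset.Ico k (l+1), xl μ N l * q1^(l-i) := Finset.sum_le_sum hup
      _ = xl μ N l * ∑ i ∈ Finset.Ico k (l+1), q1^(l-i) := by rw [Finset.mul_sum]
      _ = _ := by rw [hA1]
    · calc ∑ i ∈ Finset.Ico (l+1) N, |xcol μ N l i|
          ≤ ∑ i ∈ Finset.Ico (l+1) N, xl μ N l * q2^(i-l) := Finset.sum_le_sum hdown
      _ = xl μ N l * ∑ i ∈ Finset.Ico (l+1) N, q2^(i-l) := by rw [Finset.mul_sum]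
      _ = _ := by rw [hA2]
  have hgeom2 : ∑ t ∈ Finset.range (N-(l+1)), q2^t ≤ 1/(1-q2) := mygeom_le hq2nn hq21 _
  have hgeom2nn : (0:ℝ) ≤ ∑ t ∈ Finset.range (N-(l+1)), q2^t :=
    Finset.sum_nonneg (fun t _ => pow_nonneg hq2nn t)
  have hxl := xl_le hμ0 N l
  have hxlpos := xl_pos hμ0 N l
  have h1q2 : (0:ℝ) < 1 - q2 := by linarith
  have h1q1 : (0:ℝ) < 1 - q1 := by linarith
  -- two numeric regimes
  rcases le_or_gt n 2 with hn2 | hn3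
  · -- n ≤ 2 : linear bound on the geometric-up sum
    have hK2 : K ≤ 2 := by rw [hK]; exact_mod_cast hn2
    have hA1le : ∑ t ∈ Finset.range (m+1), q1^t ≤ 1 + M*q1 := mylin_le hq1nn hq11.le m
    have hbr : (∑ t ∈ Finset.range (m+1), q1^t) + q2 * ∑ t ∈ Finset.range (N-(l+1)), q2^t
        ≤ (1 + M*q1) + q2 * (1/(1-q2)) := by
      apply add_le_add hA1le (mul_le_mul_of_nonneg_left hgeom2 hq2nn)
    have hfinal : (1/(dd l)) * ((1 + M*q1) + q2 * (1/(1-q2))) < 1/(2*μ) := by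
      rw [hq1, hq2, hddk, hddk1, hddl]
      have he2 : μ/(4*K+4) * (1/(1 - μ/(4*K+4))) = μ/(4*K+4-μ) := by
        rw [one_sub_div (by linarith : (4:ℝ)*K+4 ≠ 0)]
        field_simp
      rw [he2]
      rw [div_mul_eq_mul_div, div_lt_div_iff₀ (by linarith) (by linarith)]
      have hA : μ * (μ/(4*K+2)) ≤ 1 := by
        rw [mul_div_assoc', div_le_one (by linarith)]
        nlinarith [mul_nonneg (by linarith : (0:ℝ) ≤ K-1) (by linarith : (0:ℝ) ≤ 2-K)]
      have hd2 : (0:ℝ) < 4*K+4-μ := by linarith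
      have hB : 2*μ + 2*μ*(μ/(4*K+4-μ)) < 4*K+2 := by
        have h3 : 2*μ*(μ/(4*K+4-μ)) = (2*μ*μ)/(4*K+4-μ) := by ring
        have h4 : (2*μ*μ)/(4*K+4-μ) < 4*K+2-2*μ := by
          rw [div_lt_iff₀ hd2]
          nlinarith
        linarith [h3 ▸ h4]
      have hMA : 2*μ*(M*(μ/(4*K+2))) ≤ 2*M := by
        nlinarith [mul_le_mul_of_nonneg_left hA (by positivity : (0:ℝ) ≤ 2*M)]
      nlinarith [hMA, hB]
    calc ∑ i ∈ Finset.Ico k N, |xcol μ N l i|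
        ≤ xl μ N l * ((∑ t ∈ Finset.range (m+1), q1^t) + q2 * ∑ t ∈ Finset.range (N-(l+1)), q2^t) := hS
    _ ≤ (1/(dd l)) * ((1 + M*q1) + q2 * (1/(1-q2))) := by
        apply mul_le_mul hxl hbr
          (add_nonneg (Finset.sum_nonneg (fun t _ => pow_nonneg hq1nn t))
            (mul_nonneg hq2nn hgeom2nn))
          (one_div_nonneg.mpr (dd_pos l).le)
    _ < 1/(2*μ) := hfinal
  · -- n ≥ 3 : geometric bound
    have hK3 : (3:ℝ) ≤ K := by rw [hK]; exact_mod_cast hn3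
    have hA1le : ∑ t ∈ Finset.range (m+1), q1^t ≤ 1/(1-q1) := mygeom_le hq1nn hq11 _
    have hbr : (∑ t ∈ Finset.range (m+1), q1^t) + q2 * ∑ t ∈ Finset.range (N-(l+1)), q2^t
        ≤ 1/(1-q1) + q2 * (1/(1-q2)) := by
      apply add_le_add hA1le (mul_le_mul_of_nonneg_left hgeom2 hq2nn)
    have hddlk : dd k ≤ dd l := dd_mono hkl
    have hfinal : (1/(dd k)) * (1/(1-q1) + q2 * (1/(1-q2))) < 1/(2*μ) := by
      rw [hq1, hq2, hddk, hddk1]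
      have he1 : (1:ℝ)/(1 - μ/(4*K+2)) = (4*K+2)/(4*K+2-μ) := by
        rw [one_sub_div (by linarith : (4:ℝ)*K+2 ≠ 0), one_div_div]
      have he2 : μ/(4*K+4) * (1/(1 - μ/(4*K+4))) = μ/(4*K+4-μ) := by
        rw [one_sub_div (by linarith : (4:ℝ)*K+4 ≠ 0)]
        field_simp
      rw [he1, he2]
      have hd1 : (0:ℝ) < 4*K+2-μ := by linarith
      have hd2 : (0:ℝ) < 4*K+4-μ := by linarith
      rw [div_add_div _ _ (by linarith : (4:ℝ)*K+2-μ ≠ 0) (by linarith : (4:ℝ)*K+4-μ ≠ 0)]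
      rw [div_mul_div_comm, div_lt_div_iff₀ (by positivity) (by linarith)]
      have hkey := polyA (K-3) (μ-K) (by linarith) (by linarith) (by linarith)
      nlinarith [hkey]
    calc ∑ i ∈ Finset.Ico k N, |xcol μ N l i|
        ≤ xl μ N l * ((∑ t ∈ Finset.range (m+1), q1^t) + q2 * ∑ t ∈ Finset.range (N-(l+1)), q2^t) := hS
    _ ≤ (1/(dd l)) * (1/(1-q1) + q2 * (1/(1-q2))) := by
        apply mul_le_mul hxl hbr
          (add_nonneg (Finset.sum_nonneg (fun t _ => pow_nonneg hq1nn t))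
            (mul_nonneg hq2nn hgeom2nn))
          (one_div_nonneg.mpr (dd_pos l).le)
    _ ≤ (1/(dd k)) * (1/(1-q1) + q2 * (1/(1-q2))) := by
        apply mul_le_mul_of_nonneg_right _ (by positivity)
        apply div_le_div_of_nonneg_left one_pos.le (dd_pos k) hddlk
    _ < 1/(2*μ) := hfinal


set_option maxHeartbeats 2000000 in
/-- Case B : `l < 2n`. -/
lemma tailB (hμ1 : 1 ≤ μ) (hn1 : 1 ≤ n) (hnr : (n:ℝ) ≤ μ) (hnr2 : μ < (n:ℝ)+1)
    (hkN : 2*n+2 ≤ N) (hl : l < N) (hlk : l < 2*n) :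
    ∑ i ∈ Finset.Ico (2*n) N, |xcol μ N l i| < 1/(2*μ) := by
  have hμ0 : (0:ℝ) < μ := by linarith
  set k := 2*n with hk
  set K : ℝ := (n : ℝ) with hK
  have hK1 : (1:ℝ) ≤ K := by rw [hK]; exact_mod_cast hn1
  have hddk : dd k = 4*K+2 := by unfold dd; push_cast [hk]; ring
  have hddk1 : dd (k+1) = 4*K+4 := by unfold dd; push_cast [hk]; ring
  set q2 : ℝ := μ / dd (k+1) with hq2
  have hq2nn : 0 ≤ q2 := div_nonneg hμ0.le (dd_pos (k+1)).le
  have hq21 : q2 < 1 := by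
    rw [hq2, div_lt_one (dd_pos (k+1)), hddk1]; linarith
  have h1q2 : (0:ℝ) < 1 - q2 := by linarith
  have hkNlt : k < N := by omega
  have hlek : l ≤ k := hlk.le
  -- each tail entry is controlled by the entry at row k
  have hstep : ∀ i ∈ Finset.Ico k N, |xcol μ N l i| ≤ |xcol μ N l k| * q2^(i-k) := by
    intro i hi
    rw [Finset.mem_Ico] at hi
    have hki : k ≤ i := hi.1
    have hxi : xcol μ N l i
        = xcol μ N l k * ∏ j ∈ Finset.Ico k i, (-(tb μ N (j+1))) := by
      rw [xcol_ge_branch N (hlek.trans hki), xcol_ge_branch N hlek,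
        ← Finset.prod_Ico_consecutive _ hlek hki]
      ring
    rw [hxi, abs_mul]
    apply mul_le_mul_of_nonneg_left _ (abs_nonneg _)
    rw [Finset.abs_prod]
    have hcard : (Finset.Ico k i).card = i - k := Nat.card_Ico k i
    rw [← hcard]
    have habs : ∀ j ∈ Finset.Ico k i, |(-(tb μ N (j+1)))| = tb μ N (j+1) := fun j _ => by
      rw [abs_neg, abs_of_nonneg (tb_nonneg hμ0 (j+1))]
    rw [Finset.prod_congr rfl habs]
    apply myprod_le_pow _ _ _ (fun j _ => tb_nonneg hμ0 (j+1))
    intro j hj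
    rw [Finset.mem_Ico] at hj
    calc tb μ N (j+1) ≤ μ / dd (j+1) := tb_le hμ0 (j+1)
    _ ≤ μ / dd (k+1) := div_le_div_of_nonneg_left hμ0.le (dd_pos (k+1)) (dd_mono (by omega))
  have hS : ∑ i ∈ Finset.Ico k N, |xcol μ N l i| ≤ |xcol μ N l k| * (1/(1-q2)) := by
    calc ∑ i ∈ Finset.Ico k N, |xcol μ N l i|
        ≤ ∑ i ∈ Finset.Ico k N, |xcol μ N l k| * q2^(i-k) := Finset.sum_le_sum hstep
    _ = |xcol μ N l k| * ∑ i ∈ Finset.Ico k N, q2^(i-k) := by rw [Finset.mul_sum]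
    _ = |xcol μ N l k| * ∑ t ∈ Finset.range (N-k), q2^t := by
        congr 1
        rw [Finset.sum_Ico_eq_sum_range]
        exact Finset.sum_congr rfl (fun i _ => by congr 1; omega)
    _ ≤ |xcol μ N l k| * (1/(1-q2)) :=
        mul_le_mul_of_nonneg_left (mygeom_le hq2nn hq21 _) (abs_nonneg _)
  -- symmetry
  have hsym : |xcol μ N l k| = |xcol μ N k l| := by
    have h := B_abs_symm hμ0 N ⟨k, hkNlt⟩ ⟨l, hl⟩
    simpa [Bmat] using h
  -- the reflected entry bound
  have hxkl : xcol μ N k l = xl μ N k * ∏ j ∈ Finset.Ico l k, sg μ (j+1) :=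
    xcol_le_branch N hlek
  have hprodnn : (0:ℝ) ≤ ∏ j ∈ Finset.Ico l k, sg μ (j+1) :=
    Finset.prod_nonneg (fun j _ => sg_nonneg hμ0 (j+1))
  have habs2 : |xcol μ N k l| = xl μ N k * ∏ j ∈ Finset.Ico l k, sg μ (j+1) := by
    rw [hxkl, abs_mul, abs_of_pos (xl_pos hμ0 N k), abs_of_nonneg hprodnn]
  obtain ⟨c, hc⟩ : ∃ c, k = l + 2*c ∨ k = l + 2*c + 1 := ⟨(k-l)/2, by omega⟩
  have hxlk := xl_le hμ0 N k
  rcases hc with hc | hc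
  · -- even gap
    have hP : ∏ j ∈ Finset.Ico l k, sg μ (j+1) ≤ 1 := by
      rw [hc]; exact sg_pair_prod hμ0 c l
    have hxb : |xcol μ N l k| ≤ 1/(4*K+2) := by
      rw [hsym, habs2, ← hddk]
      calc xl μ N k * ∏ j ∈ Finset.Ico l k, sg μ (j+1)
          ≤ (1/dd k) * 1 := mul_le_mul hxlk hP hprodnn (one_div_nonneg.mpr (dd_pos k).le)
      _ = 1/dd k := by ring
    have hnum : (1/(4*K+2)) * (1/(1-q2)) < 1/(2*μ) := by
      rw [hq2, hddk1]
      have he1 : (1:ℝ)/(1 - μ/(4*K+4)) = (4*K+4)/(4*K+4-μ) := by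
        rw [one_sub_div (by linarith : (4:ℝ)*K+4 ≠ 0), one_div_div]
      rw [he1, div_mul_div_comm, one_mul, div_lt_div_iff₀
        (mul_pos (by linarith : (0:ℝ) < 4*K+2) (by linarith : (0:ℝ) < 4*K+4-μ)) (by linarith)]
      nlinarith [mul_nonneg (by linarith : (0:ℝ) ≤ K-1) (by linarith : (0:ℝ) ≤ μ - K)]
    calc ∑ i ∈ Finset.Ico k N, |xcol μ N l i| ≤ |xcol μ N l k| * (1/(1-q2)) := hS
    _ ≤ (1/(4*K+2)) * (1/(1-q2)) :=
        mul_le_mul_of_nonneg_right hxb (one_div_nonneg.mpr h1q2.le)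
    _ < 1/(2*μ) := hnum
  · -- odd gap
    have hcast : ((l + 2*c : ℕ) : ℝ) = 2*K - 1 := by
      have h1 : (l:ℝ) + 2*(c:ℝ) + 1 = 2*K := by
        rw [hK]
        exact_mod_cast congrArg (Nat.cast : ℕ → ℝ) hc.symm
      push_cast
      linarith
    have hdd1 : dd (l + 2*c) = 4*K := by unfold dd; rw [hcast]; ring
    have hP : ∏ j ∈ Finset.Ico l k, sg μ (j+1) ≤ μ/(4*K) := by
      rw [hc, Finset.prod_Ico_succ_top (by omega : l ≤ l + 2*c)]
      calc (∏ j ∈ Finset.Ico l (l+2*c), sg μ (j+1)) * sg μ (l+2*c+1)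
          ≤ 1 * (μ/(4*K)) := by
            apply mul_le_mul (sg_pair_prod hμ0 c l) _ (sg_nonneg hμ0 _) zero_le_one
            calc sg μ ((l+2*c)+1) ≤ μ / dd (l+2*c) := sg_le hμ0 (l+2*c)
            _ = μ/(4*K) := by rw [hdd1]
      _ = μ/(4*K) := by ring
    have hxb : |xcol μ N l k| ≤ (1/(4*K+2)) * (μ/(4*K)) := by
      rw [hsym, habs2, ← hddk]
      exact mul_le_mul hxlk hP hprodnn (one_div_nonneg.mpr (dd_pos k).le)
    have hnum : ((1/(4*K+2)) * (μ/(4*K))) * (1/(1-q2)) < 1/(2*μ) := by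
      rw [hq2, hddk1]
      have he1 : (1:ℝ)/(1 - μ/(4*K+4)) = (4*K+4)/(4*K+4-μ) := by
        rw [one_sub_div (by linarith : (4:ℝ)*K+4 ≠ 0), one_div_div]
      rw [he1, div_mul_div_comm, one_mul, div_mul_div_comm,
        div_lt_div_iff₀ (mul_pos (mul_pos (by linarith : (0:ℝ) < 4*K+2)
          (by linarith : (0:ℝ) < 4*K)) (by linarith : (0:ℝ) < 4*K+4-μ)) (by linarith)]
      nlinarith [mul_nonneg (by linarith : (0:ℝ) ≤ K-1) (by linarith : (0:ℝ) ≤ μ - K),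
        mul_nonneg (mul_nonneg (by linarith : (0:ℝ) ≤ K-1) (by linarith : (0:ℝ) ≤ μ - K))
          (by linarith : (0:ℝ) ≤ μ),
        sq_nonneg (μ - K), sq_nonneg (K+1-μ),
        mul_pos (by linarith : (0:ℝ) < μ) (by linarith : (0:ℝ) < K)]
    calc ∑ i ∈ Finset.Ico k N, |xcol μ N l i| ≤ |xcol μ N l k| * (1/(1-q2)) := hS
    _ ≤ ((1/(4*K+2)) * (μ/(4*K))) * (1/(1-q2)) :=
        mul_le_mul_of_nonneg_right hxb (one_div_nonneg.mpr h1q2.le)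
    _ < 1/(2*μ) := hnum

end Tail

/-- `‖T_N(μ)⁻¹‖₁ < ‖(T_N(μ)⁻¹)_{rows 1:2⌊μ⌋}‖₁ + 1/(2μ)` for all even `N > 2μ`. -/
theorem stmt9 (μ : ℝ) (hμ : 1 ≤ μ) (N : ℕ) (hNe : Even N) (hN : 2 * μ < (N : ℝ)) :
    mat1norm ((Tmat N μ)⁻¹) <
      mat1norm (((Tmat N μ)⁻¹).submatrix
        (Fin.castLE (show 2 * ⌊μ⌋₊ ≤ N by
          have h1 : (⌊μ⌋₊ : ℝ) ≤ μ := Nat.floor_le (by linarith)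
          have h2 : ((2 * ⌊μ⌋₊ : ℕ) : ℝ) < (N : ℝ) := by push_cast; linarith
          exact_mod_cast h2.le)) id) + 1 / (2 * μ) := by
  have hμ0 : (0:ℝ) < μ := by linarith
  set n := ⌊μ⌋₊ with hn
  have hn1 : 1 ≤ n := Nat.le_floor (by exact_mod_cast hμ)
  have hnr : (n:ℝ) ≤ μ := Nat.floor_le hμ0.le
  have hnr2 : μ < (n:ℝ)+1 := Nat.lt_floor_add_one μ
  have hkr : ((2*n : ℕ):ℝ) ≤ 2*μ := by push_cast; linarith
  have hkltN : 2*n < N := by exact_mod_cast lt_of_le_of_lt hkr hN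
  have hkN : 2*n + 2 ≤ N := by
    obtain ⟨p, hp⟩ := hNe
    omega
  have hN0 : 0 < N := by omega
  rw [Tinv_eq hμ0]
  haveI : Nonempty (Fin N) := ⟨⟨0, hN0⟩⟩
  obtain ⟨l₀, hl₀⟩ := Finite.exists_max (fun l : Fin N => ∑ i : Fin N, |Bmat N μ i l|)
  have hle : mat1norm (Bmat N μ) ≤ ∑ i : Fin N, |Bmat N μ i l₀| := by
    unfold mat1norm
    exact ciSup_le hl₀
  have hsum : ∑ i : Fin N, |Bmat N μ i l₀|
      = (∑ i ∈ Finset.range (2*n), |xcol μ N (l₀:ℕ) i|)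
        + ∑ i ∈ Finset.Ico (2*n) N, |xcol μ N (l₀:ℕ) i| := by
    have h1 : ∑ i : Fin N, |Bmat N μ i l₀| = ∑ i ∈ Finset.range N, |xcol μ N (l₀:ℕ) i| := by
      rw [← Fin.sum_univ_eq_sum_range (fun i => |xcol μ N (l₀:ℕ) i|) N]
      rfl
    rw [h1, Finset.range_eq_Ico,
      ← Finset.sum_Ico_consecutive _ (Nat.zero_le (2*n)) (by omega : 2*n ≤ N),
      ← Finset.range_eq_Ico]
  have htail : ∑ i ∈ Finset.Ico (2*n) N, |xcol μ N (l₀:ℕ) i| < 1/(2*μ) := by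
    rcases le_or_gt (2*n) (l₀:ℕ) with h | h
    · exact tailA hμ hn1 hnr hnr2 hkN l₀.isLt h
    · exact tailB hμ hn1 hnr hnr2 hkN l₀.isLt h
  have hhead : ∀ (hsub : 2*n ≤ N), ∑ i ∈ Finset.range (2*n), |xcol μ N (l₀:ℕ) i|
      ≤ mat1norm ((Bmat N μ).submatrix (Fin.castLE hsub) id) := by
    intro hsub
    have h2 : ∑ i ∈ Finset.range (2*n), |xcol μ N (l₀:ℕ) i|
        = ∑ i : Fin (2*n), |(Bmat N μ).submatrix (Fin.castLE hsub) id i l₀| := by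
      rw [← Fin.sum_univ_eq_sum_range (fun i => |xcol μ N (l₀:ℕ) i|) (2*n)]
      rfl
    rw [h2]
    unfold mat1norm
    exact le_ciSup (f := fun l : Fin N =>
        ∑ i : Fin (2*n), |(Bmat N μ).submatrix (Fin.castLE hsub) id i l|)
      (Set.Finite.bddAbove (Set.finite_range _)) l₀
  have hsubN : 2*n ≤ N := by omega
  calc mat1norm (Bmat N μ) ≤ ∑ i : Fin N, |Bmat N μ i l₀| := hle
  _ = _ + _ := hsum
  _ < mat1norm ((Bmat N μ).submatrix (Fin.castLE hsubN) id) + 1/(2*μ) :=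
      add_lt_add_of_le_of_lt (hhead hsubN) htail
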